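/- Let M be a monotone Möbius structure on S¹. For each harmonicity type i ∈ {1,2,3} and each nondegenerate triple t=(x₁,x₂,x₃), there exists a unique point y ∈ S¹ such that the 4-tuple (y,x₁,x₂,x₃) is harmonic of type i; concretely, for type corresponding to infinitely remote point x_i, y is the unique midpoint: |x_{i+1} y|_{x_i} = |y x_{i+2}|_{x_i}. Moreover the pairs (x_i, y) and (x_{i+1}, x_{i+2}) separate each other. -/

import Mathlib

open scoped Classical

section Mobius

variable {X : Type*}

/-- The pairs `(x,y)` and `(z,u)` separate each other on the circularly ordered set `X`:
`z` and `u` lie on different open arcs determined by `x` and `y`. -/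
def PairSeparates [CircularOrder X] (x y z u : X) : Prop :=
  (sbtw x z y ∧ sbtw y u x) ∨ (sbtw x u y ∧ sbtw y z x)

/-- The pair `(d₁,d₂)` separates the pairs `(b₁,b₂)` and `(c₁,c₂)`: the latter two pairs lie
on different open arcs determined by `(d₁,d₂)`. -/
def ArcSepPairs [CircularOrder X] (d₁ d₂ b₁ b₂ c₁ c₂ : X) : Prop :=
  (sbtw d₁ b₁ d₂ ∧ sbtw d₁ b₂ d₂ ∧ sbtw d₂ c₁ d₁ ∧ sbtw d₂ c₂ d₁) ∨
  (sbtw d₁ c₁ d₂ ∧ sbtw d₁ c₂ d₂ ∧ sbtw d₂ b₁ d₁ ∧ sbtw d₂ b₂ d₁)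

/-- Two pairs `(b₁,b₂)` and `(c₁,c₂)` of points are in the strong causal relation:
either of them lies entirely in one open arc determined by the other. -/
def StrongCausal [CircularOrder X] (b₁ b₂ c₁ c₂ : X) : Prop :=
  (sbtw b₁ c₁ b₂ ∧ sbtw b₁ c₂ b₂) ∨ (sbtw b₂ c₁ b₁ ∧ sbtw b₂ c₂ b₁) ∨
  (sbtw c₁ b₁ c₂ ∧ sbtw c₁ b₂ c₂) ∨ (sbtw c₂ b₁ c₁ ∧ sbtw c₂ b₂ c₁)

/-- The topology generated by open balls of the semi-metrics with infinitely remote points,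
centered at finite points. `D ω x y` denotes `|xy|` in the semi-metric with infinitely remote
point `ω`. -/
def MTopology (D : X → X → X → ℝ) : TopologicalSpace X :=
  TopologicalSpace.generateFrom
    {s | ∃ ω x r, x ≠ ω ∧ s = {y | y ≠ ω ∧ D ω x y < r}}

/-- A (ptolemaic) monotone Möbius structure on a circle `X`, presented by the family of its
semi-metrics with infinitely remote points: `D ω x y` is the distance `|xy|_ω` in the
semi-metric with infinitely remote point `ω` (defined for `x, y ≠ ω`).  The semi-metrics
are pairwise related by metric inversion (up to homothety), every one of them satisfies the
Ptolemy inequality, the monotonicity axiom (M) holds, the M-topology is the given topology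
of `X`, and `X` is homeomorphic to the circle. -/
structure MonotoneMobius (X : Type*) [CircularOrder X] [t : TopologicalSpace X] where
  D : X → X → X → ℝ
  symm : ∀ ω x y, D ω x y = D ω y x
  refl : ∀ ω x, D ω x x = 0
  pos : ∀ ω x y, x ≠ y → x ≠ ω → y ≠ ω → 0 < D ω x y
  inversion : ∀ ω ω', ω ≠ ω' → ∃ c : ℝ, 0 < c ∧ ∀ x y, x ≠ ω → y ≠ ω → x ≠ ω' → y ≠ ω' →
    D ω' x y = c * D ω x y / (D ω x ω' * D ω y ω')
  ptolemy : ∀ ω x y z u, x ≠ ω → y ≠ ω → z ≠ ω → u ≠ ω →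
    D ω x y * D ω z u ≤ D ω x z * D ω y u + D ω x u * D ω y z
  mono : ∀ ω x y z u, x ≠ ω → y ≠ ω → z ≠ ω → u ≠ ω → PairSeparates x y z u →
    D ω x z * D ω y u < D ω x y * D ω z u ∧ D ω x u * D ω y z < D ω x y * D ω z u
  mtop : MTopology D = t
  circle : Nonempty (X ≃ₜ AddCircle (1 : ℝ))

variable [CircularOrder X] [TopologicalSpace X]

/-- The 4-tuple `(x,y,z,u)` is harmonic (of the first type): `|xz||yu| = |xu||yz|` in any
semi-metric of the Möbius structure. -/
def MonotoneMobius.Harmonic (M : MonotoneMobius X) (x y z u : X) : Prop :=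
  ∀ ω, ω ≠ x → ω ≠ y → ω ≠ z → ω ≠ u →
    M.D ω x z * M.D ω y u = M.D ω x u * M.D ω y z

/-- The distance `|q q'| = |ln ((|xp'||yp|)/(|xp||yp'|))|` between two harmonic pairs
`q = ((x,y),(p,·))` and `q' = ((x,y),(p',·))` with common axis `(x,y)`; computed here in the
semi-metric with infinitely remote point `x`, where it equals `|ln (|yp|_x / |yp'|_x)|`. -/
noncomputable def MonotoneMobius.lineDist (M : MonotoneMobius X) (x y p p' : X) : ℝ :=
  |Real.log (M.D x y p / M.D x y p')|

end Mobius

/-! ### Auxiliary lemmas on circular orders -/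

section Circ
variable {X : Type*} [CircularOrder X] {a b c d x y z u : X}

lemma sbtw_total' (hab : a ≠ b) (hbc : b ≠ c) (hca : c ≠ a) : sbtw a b c ∨ sbtw c b a := by
  rcases btw_total a b c with h | h
  · by_cases h' : btw c b a
    · rcases btw_antisymm h h' with rfl | rfl | rfl
      · exact absurd rfl hab
      · exact absurd rfl hbc
      · exact absurd rfl hca
    · exact Or.inl (sbtw_of_btw_not_btw h h')
  · by_cases h' : btw a b c
    · rcases btw_antisymm h' h with rfl | rfl | rfl
      · exact absurd rfl hab
      · exact absurd rfl hbc
      · exact absurd rfl hca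
    · exact Or.inr (sbtw_of_btw_not_btw h h')

lemma tr1 (h1 : sbtw a b c) (h2 : sbtw a d b) : sbtw a d c :=
  (sbtw_trans_left h2.cyclic_left h1.cyclic_left).cyclic_right

lemma tr2 (h1 : sbtw a b c) (h2 : sbtw b d c) : sbtw a d c := sbtw_trans_left h1 h2

lemma tr3 (h1 : sbtw a b c) (h2 : sbtw a c d) : sbtw a b d := sbtw_trans_right h1 h2

lemma ps_aux (h1 : sbtw x z y) (h2 : sbtw y u x) : sbtw z y u ∧ sbtw u x z := by
  have hyxz : sbtw y x z := h1.cyclic_left.cyclic_left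
  have hyuz : sbtw y u z := tr3 h2 hyxz
  have hxyu : sbtw x y u := h2.cyclic_left.cyclic_left
  have hxzu : sbtw x z u := tr3 h1 hxyu
  exact ⟨hyuz.cyclic_left.cyclic_left, hxzu.cyclic_left.cyclic_left⟩

lemma ps_pair_swap (h : PairSeparates x y z u) : PairSeparates z u x y := by
  rcases h with ⟨h1, h2⟩ | ⟨h1, h2⟩
  · exact Or.inr (ps_aux h1 h2)
  · rcases ps_aux h1 h2 with ⟨ha, hb⟩
    exact Or.inl ⟨hb, ha⟩

lemma ps_swap_right (h : PairSeparates x y z u) : PairSeparates x y u z := h.symm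

lemma ps_swap_left (h : PairSeparates x y z u) : PairSeparates y x z u := by
  rcases h with ⟨h1, h2⟩ | ⟨h1, h2⟩
  · exact Or.inr ⟨h2, h1⟩
  · exact Or.inl ⟨h2, h1⟩

lemma ps_total (hxy : x ≠ y) (hxz : x ≠ z) (hxu : x ≠ u) (hyz : y ≠ z) (hyu : y ≠ u)
    (hzu : z ≠ u) :
    PairSeparates x y z u ∨ PairSeparates x z y u ∨ PairSeparates x u y z := by
  rcases sbtw_total' hxz hyz.symm hxy.symm with hA | hB
  · rcases sbtw_total' hxu hyu.symm hxy.symm with hA1 | hA2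
    · rcases sbtw_total' hxz hzu hxu.symm with hA1a | hA1b
      · exact Or.inr (Or.inr (Or.inr ⟨hA1a, hA1.cyclic_left⟩))
      · exact Or.inr (Or.inl (Or.inr ⟨hA1b.cyclic_left.cyclic_left, hA.cyclic_left⟩))
    · exact Or.inl (Or.inl ⟨hA, hA2⟩)
  · rcases sbtw_total' hxu hyu.symm hxy.symm with hB1 | hB2
    · exact Or.inl (Or.inr ⟨hB1, hB⟩)
    · rcases sbtw_total' hyz hzu hyu.symm with hB2a | hB2b
      · have hxzu : sbtw x z u := sbtw_trans_left hB2.cyclic_left.cyclic_left hB2a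
        exact Or.inr (Or.inl (Or.inl ⟨hB.cyclic_left.cyclic_left, hxzu.cyclic_left⟩))
      · have hzxu : sbtw z x u := sbtw_trans_right hB.cyclic_left hB2b.cyclic_left
        exact Or.inr (Or.inr (Or.inl ⟨hB2.cyclic_left.cyclic_left,
          hzxu.cyclic_left.cyclic_left⟩))

lemma sbtw_ne {a b c : X} (h : sbtw a b c) : a ≠ b ∧ b ≠ c ∧ a ≠ c :=
  ⟨fun e => sbtw_irrefl_left (e ▸ h), fun e => sbtw_irrefl_right (e ▸ h),
   fun e => sbtw_irrefl_left_right (e ▸ h)⟩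

lemma ps_ne (h : PairSeparates x y z u) :
    x ≠ y ∧ x ≠ z ∧ x ≠ u ∧ y ≠ z ∧ y ≠ u ∧ z ≠ u := by
  rcases h with ⟨h1, h2⟩ | ⟨h1, h2⟩
  · exact ⟨(sbtw_ne h1).2.2, (sbtw_ne h1).1, ((sbtw_ne h2).2.1).symm,
      ((sbtw_ne h1).2.1).symm, (sbtw_ne h2).1, fun e => sbtw_asymm h1 (e ▸ h2)⟩
  · exact ⟨(sbtw_ne h1).2.2, ((sbtw_ne h2).2.1).symm, (sbtw_ne h1).1,
      (sbtw_ne h2).1, ((sbtw_ne h1).2.1).symm, fun e => sbtw_asymm h1 (e ▸ h2)⟩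

lemma mid_of {w a b y : X} (h1 : sbtw w a y) (h2 : sbtw w y b) : sbtw a y b := by
  have hab : a ≠ b := by
    intro e; subst e
    exact sbtw_asymm h1 h2.cyclic_left
  rcases sbtw_total' (sbtw_ne h1).2.1 (sbtw_ne h2).2.1 hab.symm with h | h
  · exact h
  · exfalso
    have h3 : sbtw a b y := h.cyclic_left.cyclic_left
    have h4 : sbtw w b y := tr2 h1 h3
    exact sbtw_asymm h4 h2.cyclic_left
end Circ

/-! ### Auxiliary lemmas on monotone Möbius structures -/

namespace MonotoneMobius
variable {X : Type*} [CircularOrder X] [TopologicalSpace X] {M : MonotoneMobius X}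

lemma infiniteX (M : MonotoneMobius X) : Infinite X := by
  obtain ⟨e⟩ := M.circle
  haveI : Fact ((0:ℝ) < 1) := ⟨one_pos⟩
  haveI : Infinite (Set.Ico (0:ℝ) (0+1)) :=
    Set.infinite_coe_iff.mpr (Set.Ico_infinite (by norm_num))
  haveI : Infinite (AddCircle (1:ℝ)) :=
    Infinite.of_injective (AddCircle.equivIco (1:ℝ) 0).symm (Equiv.injective _)
  exact Infinite.of_injective e.symm e.symm.toEquiv.injective

lemma exists_notin (M : MonotoneMobius X) (s : Finset X) : ∃ ω : X, ω ∉ s := by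
  haveI := M.infiniteX
  exact Infinite.exists_notMem_finset s

/-- Key monotonicity transfer: if the pair `(p,r)` separates `(q,s)`, then in the
semi-metric with infinitely remote point `s` we have `|pq| < |pr|`. -/
lemma sep_lt {p q r s : X} (h : PairSeparates p r q s) : M.D s p q < M.D s p r := by
  obtain ⟨hpr, hpq, hps, hrq, hrs, hqs⟩ := ps_ne h
  obtain ⟨ω, hω⟩ := M.exists_notin {p, q, r, s}
  simp only [Finset.mem_insert, Finset.mem_singleton, not_or] at hω
  obtain ⟨hωp, hωq, hωr, hωs⟩ := hω
  have hm := (M.mono ω p r q s (Ne.symm hωp) (Ne.symm hωr) (Ne.symm hωq) (Ne.symm hωs) h).1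
  obtain ⟨c, hc, hinv⟩ := M.inversion ω s hωs
  have e1 := hinv p q (Ne.symm hωp) (Ne.symm hωq) hps hqs
  have e2 := hinv p r (Ne.symm hωp) (Ne.symm hωr) hps hrs
  have hKp : 0 < M.D ω p s := M.pos ω p s hps (Ne.symm hωp) (Ne.symm hωs)
  have hKq : 0 < M.D ω q s := M.pos ω q s hqs (Ne.symm hωq) (Ne.symm hωs)
  have hKr : 0 < M.D ω r s := M.pos ω r s hrs (Ne.symm hωr) (Ne.symm hωs)
  rw [e1, e2, div_lt_div_iff₀ (by positivity) (by positivity)]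
  nlinarith [mul_pos hc hKp]

/-- A "midpoint" lies on the arc between `a` and `b` not containing `ω₀`. -/
lemma ps_of_eq {ω₀ a b y : X} (h1 : ω₀ ≠ y) (h2 : ω₀ ≠ a) (h3 : ω₀ ≠ b) (h4 : y ≠ a)
    (h5 : y ≠ b) (h6 : a ≠ b) (hC : M.D ω₀ a y = M.D ω₀ y b) :
    PairSeparates ω₀ y a b := by
  rcases ps_total h1 h2 h3 h4 h5 h6 with h | h | h
  · exact h
  · exfalso
    have hlt := M.sep_lt (ps_swap_right (ps_pair_swap h))
    rw [M.symm ω₀ a y] at hC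
    linarith
  · exfalso
    have hlt := M.sep_lt (ps_swap_right (ps_pair_swap h))
    rw [M.symm ω₀ a y] at hC
    linarith

lemma uniq_aux2 {ω₀ a b y y' : X} (hC : M.D ω₀ a y = M.D ω₀ y b)
    (hC' : M.D ω₀ a y' = M.D ω₀ y' b)
    (h1 : sbtw ω₀ a y) (h2 : sbtw y b ω₀) (h1' : sbtw ω₀ a y') (h2' : sbtw y' b ω₀)
    (hy : sbtw a y y') : False := by
  have hω₀y'b : sbtw ω₀ y' b := h2'.cyclic_left.cyclic_left
  have hω₀yb : sbtw ω₀ y b := h2.cyclic_left.cyclic_left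
  have hay'b : sbtw a y' b := mid_of h1' hω₀y'b
  have hyy'b : sbtw y y' b := mid_of hy hay'b
  have hps1 : PairSeparates a y' y ω₀ := Or.inl ⟨hy, h1'.cyclic_left.cyclic_left⟩
  have hps2 : PairSeparates b y y' ω₀ := Or.inr ⟨h2.cyclic_left, hyy'b⟩
  have l1 := M.sep_lt hps1
  have l2 := M.sep_lt hps2
  have s1 := M.symm ω₀ b y'
  have s2 := M.symm ω₀ b y
  linarith

lemma uniq_aux {ω₀ a b y y' : X} (hC : M.D ω₀ a y = M.D ω₀ y b)
    (hC' : M.D ω₀ a y' = M.D ω₀ y' b)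
    (h1 : sbtw ω₀ a y) (h2 : sbtw y b ω₀) (h1' : sbtw ω₀ a y') (h2' : sbtw y' b ω₀)
    (hne : y ≠ y') : False := by
  rcases sbtw_total' (sbtw_ne h1).2.1 hne ((sbtw_ne h1').2.1).symm with hy | hy
  · exact M.uniq_aux2 hC hC' h1 h2 h1' h2' hy
  · exact M.uniq_aux2 hC' hC h1' h2' h1 h2 hy.cyclic_left.cyclic_left

/-- Uniqueness of the midpoint. -/
lemma uniq {ω₀ a b y y' : X} (hC : M.D ω₀ a y = M.D ω₀ y b)
    (hC' : M.D ω₀ a y' = M.D ω₀ y' b)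
    (hD : PairSeparates ω₀ y a b) (hD' : PairSeparates ω₀ y' a b) : y = y' := by
  by_contra hne
  have hC2 : M.D ω₀ b y = M.D ω₀ y a := by
    rw [M.symm ω₀ b y, ← hC, M.symm ω₀ a y]
  have hC2' : M.D ω₀ b y' = M.D ω₀ y' a := by
    rw [M.symm ω₀ b y', ← hC', M.symm ω₀ a y']
  rcases hD with ⟨h1, h2⟩ | ⟨h1, h2⟩ <;> rcases hD' with ⟨h1', h2'⟩ | ⟨h1', h2'⟩
  · exact M.uniq_aux hC hC' h1 h2 h1' h2' hne
  · have e1 : sbtw ω₀ a b := tr3 h1 h2.cyclic_left.cyclic_left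
    have e2 : sbtw ω₀ b a := tr3 h1' h2'.cyclic_left.cyclic_left
    exact sbtw_asymm e1 e2.cyclic_left
  · have e1 : sbtw ω₀ b a := tr3 h1 h2.cyclic_left.cyclic_left
    have e2 : sbtw ω₀ a b := tr3 h1' h2'.cyclic_left.cyclic_left
    exact sbtw_asymm e2 e1.cyclic_left
  · exact M.uniq_aux hC2 hC2' h1 h2 h1' h2' hne

/-- Harmonicity at every infinitely remote point follows from the midpoint property. -/
lemma harm_of_mid {ω₀ a b y ω : X} (hωω₀ : ω ≠ ω₀) (hωa : ω ≠ a) (hωb : ω ≠ b)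
    (hωy : ω ≠ y) (haω₀ : a ≠ ω₀) (hbω₀ : b ≠ ω₀) (hyω₀ : y ≠ ω₀)
    (hC : M.D ω₀ a y = M.D ω₀ y b) :
    M.D ω a y * M.D ω ω₀ b = M.D ω y b * M.D ω ω₀ a := by
  obtain ⟨c, hc, hinv⟩ := M.inversion ω ω₀ hωω₀
  have e1 := hinv a y (Ne.symm hωa) (Ne.symm hωy) haω₀ hyω₀
  have e2 := hinv y b (Ne.symm hωy) (Ne.symm hωb) hyω₀ hbω₀
  have hKa : 0 < M.D ω a ω₀ := M.pos ω a ω₀ haω₀ (Ne.symm hωa) (Ne.symm hωω₀)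
  have hKy : 0 < M.D ω y ω₀ := M.pos ω y ω₀ hyω₀ (Ne.symm hωy) (Ne.symm hωω₀)
  have hKb : 0 < M.D ω b ω₀ := M.pos ω b ω₀ hbω₀ (Ne.symm hωb) (Ne.symm hωω₀)
  rw [e1, e2, div_eq_div_iff (by positivity) (by positivity)] at hC
  rw [M.symm ω ω₀ b, M.symm ω ω₀ a]
  apply mul_left_cancel₀ (show c * M.D ω y ω₀ ≠ 0 by positivity)
  linear_combination hC

lemma const_k {ω₀ a : X} (haω₀ : a ≠ ω₀) :
    ∃ k : ℝ, 0 < k ∧ ∀ u, u ≠ a → u ≠ ω₀ → M.D ω₀ a u * M.D a ω₀ u = k := by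
  obtain ⟨c₁, hc₁, hinv₁⟩ := M.inversion ω₀ a (Ne.symm haω₀)
  obtain ⟨c₂, hc₂, hinv₂⟩ := M.inversion a ω₀ haω₀
  have key : ∀ x y : X, x ≠ a → x ≠ ω₀ → y ≠ a → y ≠ ω₀ → x ≠ y →
      (M.D ω₀ a x * M.D a ω₀ x) * (M.D ω₀ a y * M.D a ω₀ y) = c₁ * c₂ := by
    intro x y hxa hxω₀ hya hyω₀ hxy
    have E1 := hinv₁ x y hxω₀ hyω₀ hxa hya
    have E2 := hinv₂ x y hxa hya hxω₀ hyω₀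
    have p1 : 0 < M.D ω₀ x a := M.pos _ _ _ hxa hxω₀ haω₀
    have p2 : 0 < M.D ω₀ y a := M.pos _ _ _ hya hyω₀ haω₀
    have p3 : 0 < M.D a x ω₀ := M.pos _ _ _ hxω₀ hxa (Ne.symm haω₀)
    have p4 : 0 < M.D a y ω₀ := M.pos _ _ _ hyω₀ hya (Ne.symm haω₀)
    have p5 : 0 < M.D ω₀ x y := M.pos _ _ _ hxy hxω₀ hyω₀
    rw [E1] at E2
    rw [M.symm ω₀ a x, M.symm a ω₀ x, M.symm ω₀ a y, M.symm a ω₀ y]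
    field_simp at E2
    apply mul_left_cancel₀ (ne_of_gt p5)
    linear_combination M.D ω₀ x y * E2
  obtain ⟨x₁, hx₁⟩ := M.exists_notin {a, ω₀}
  obtain ⟨x₂, hx₂⟩ := M.exists_notin {a, ω₀, x₁}
  obtain ⟨x₃, hx₃⟩ := M.exists_notin {a, ω₀, x₁, x₂}
  simp only [Finset.mem_insert, Finset.mem_singleton, not_or] at hx₁ hx₂ hx₃
  set g : X → ℝ := fun u => M.D ω₀ a u * M.D a ω₀ u with hgdef
  have h12 : g x₁ * g x₂ = c₁ * c₂ := key _ _ hx₁.1 hx₁.2 hx₂.1 hx₂.2.1 (Ne.symm hx₂.2.2)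
  have h13 : g x₁ * g x₃ = c₁ * c₂ := key _ _ hx₁.1 hx₁.2 hx₃.1 hx₃.2.1 (Ne.symm hx₃.2.2.1)
  have h23 : g x₂ * g x₃ = c₁ * c₂ := key _ _ hx₂.1 hx₂.2.1 hx₃.1 hx₃.2.1 (Ne.symm hx₃.2.2.2)
  have hg1 : 0 < g x₁ := mul_pos (M.pos _ _ _ (Ne.symm hx₁.1) haω₀ hx₁.2)
    (M.pos _ _ _ (Ne.symm hx₁.2) (Ne.symm haω₀) hx₁.1)
  have hg2 : 0 < g x₂ := mul_pos (M.pos _ _ _ (Ne.symm hx₂.1) haω₀ hx₂.2.1)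
    (M.pos _ _ _ (Ne.symm hx₂.2.1) (Ne.symm haω₀) hx₂.1)
  have hsq : g x₂ * g x₂ = c₁ * c₂ := by
    have e23 : g x₂ = g x₃ := by
      apply mul_left_cancel₀ (ne_of_gt hg1); rw [h12, h13]
    calc g x₂ * g x₂ = g x₂ * g x₃ := by rw [e23]
      _ = c₁ * c₂ := h23
  refine ⟨g x₂, hg2, fun u hua huω₀ => ?_⟩
  rcases eq_or_ne u x₂ with rfl | hux₂
  · rfl
  · have h := key u x₂ hua huω₀ hx₂.1 hx₂.2.1 hux₂
    have h2 : g u * g x₂ = g x₂ * g x₂ := by rw [h, hsq]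
    exact mul_right_cancel₀ (ne_of_gt hg2) h2

lemma isOpen_ball {ω x : X} (r : ℝ) (hx : x ≠ ω) :
    IsOpen {y | y ≠ ω ∧ M.D ω x y < r} := by
  have h : @IsOpen X (MTopology M.D) {y | y ≠ ω ∧ M.D ω x y < r} :=
    TopologicalSpace.isOpen_generateFrom_of_mem ⟨ω, x, r, hx, rfl⟩
  rwa [M.mtop] at h

lemma isOpen_compl_singleton (M : MonotoneMobius X) (z : X) : IsOpen ({z}ᶜ : Set X) := by
  obtain ⟨e⟩ := M.circle
  have h : ({z} : Set X) = e ⁻¹' {e z} := by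
    ext w; simp [e.toEquiv.injective.eq_iff]
  rw [isOpen_compl_iff, h]
  exact isClosed_singleton.preimage e.continuous

lemma isOpen_superlevel {ω₀ a : X} (haω₀ : a ≠ ω₀) (r : ℝ) :
    IsOpen {y | y ≠ ω₀ ∧ r < M.D ω₀ a y} := by
  rcases lt_trichotomy r 0 with hr | rfl | hr
  · have h : {y | y ≠ ω₀ ∧ r < M.D ω₀ a y} = {ω₀}ᶜ := by
      ext y
      simp only [Set.mem_setOf_eq, Set.mem_compl_iff, Set.mem_singleton_iff]
      refine ⟨fun h => h.1, fun h => ⟨h, ?_⟩⟩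
      rcases eq_or_ne y a with rfl | hya
      · rw [M.refl]; linarith
      · exact lt_trans hr (M.pos ω₀ a y (Ne.symm hya) haω₀ h)
    rw [h]; exact M.isOpen_compl_singleton ω₀
  · have h : {y | y ≠ ω₀ ∧ (0:ℝ) < M.D ω₀ a y} = {ω₀}ᶜ ∩ {a}ᶜ := by
      ext y
      simp only [Set.mem_setOf_eq, Set.mem_inter_iff, Set.mem_compl_iff,
        Set.mem_singleton_iff]
      constructor
      · rintro ⟨h1, h2⟩
        refine ⟨h1, ?_⟩
        rintro rfl; rw [M.refl] at h2; linarith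
      · rintro ⟨h1, h2⟩
        exact ⟨h1, M.pos ω₀ a y (Ne.symm h2) haω₀ h1⟩
    rw [h]
    exact (M.isOpen_compl_singleton ω₀).inter (M.isOpen_compl_singleton a)
  · obtain ⟨k, hk, hku⟩ := M.const_k haω₀
    have h : {y | y ≠ ω₀ ∧ r < M.D ω₀ a y} =
        {y | y ≠ a ∧ M.D a ω₀ y < k / r} ∩ {ω₀}ᶜ := by
      ext y
      simp only [Set.mem_setOf_eq, Set.mem_inter_iff, Set.mem_compl_iff,
        Set.mem_singleton_iff]
      constructor
      · rintro ⟨hyω₀, hry⟩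
        have hya : y ≠ a := by rintro rfl; rw [M.refl] at hry; linarith
        have hd : 0 < M.D ω₀ a y := M.pos _ _ _ (Ne.symm hya) haω₀ hyω₀
        have hgy := hku y hya hyω₀
        have he : M.D a ω₀ y = k / M.D ω₀ a y := by
          field_simp; linarith [hgy]
        refine ⟨⟨hya, ?_⟩, hyω₀⟩
        rw [he]
        exact div_lt_div_of_pos_left hk hr hry
      · rintro ⟨⟨hya, hlt⟩, hyω₀⟩
        refine ⟨hyω₀, ?_⟩
        have hd : 0 < M.D ω₀ a y := M.pos _ _ _ (Ne.symm hya) haω₀ hyω₀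
        have hgy := hku y hya hyω₀
        have he : M.D a ω₀ y = k / M.D ω₀ a y := by
          field_simp; linarith [hgy]
        rw [he] at hlt
        exact (div_lt_div_iff_of_pos_left hk hd hr).mp hlt
    rw [h]
    exact (M.isOpen_ball _ (Ne.symm haω₀)).inter (M.isOpen_compl_singleton ω₀)

lemma contOn {ω₀ a : X} (haω₀ : a ≠ ω₀) :
    ContinuousOn (fun y => M.D ω₀ a y) {y : X | y ≠ ω₀} := by
  intro x hx
  have hx' : x ≠ ω₀ := hx
  apply tendsto_order.2
  constructor
  · intro b hb
    have hopen := M.isOpen_superlevel haω₀ b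
    have hmem : x ∈ {y | y ≠ ω₀ ∧ b < M.D ω₀ a y} := ⟨hx', hb⟩
    filter_upwards [mem_nhdsWithin_of_mem_nhds (hopen.mem_nhds hmem)] with y hy
    exact hy.2
  · intro b hb
    have hopen := M.isOpen_ball (ω := ω₀) (x := a) b haω₀
    have hmem : x ∈ {y | y ≠ ω₀ ∧ M.D ω₀ a y < b} := ⟨hx', hb⟩
    filter_upwards [mem_nhdsWithin_of_mem_nhds (hopen.mem_nhds hmem)] with y hy
    exact hy.2

end MonotoneMobius

lemma isPreconn_compl (z : AddCircle (1:ℝ)) :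
    IsPreconnected ({z}ᶜ : Set (AddCircle (1:ℝ))) := by
  haveI : Fact ((0:ℝ) < 1) := ⟨one_pos⟩
  obtain ⟨x, _, hx⟩ := AddCircle.eq_coe_Ico z
  have himg : (fun t : ℝ => (t : AddCircle (1:ℝ))) '' Set.Ioo x (x+1) = {z}ᶜ := by
    ext w
    simp only [Set.mem_image, Set.mem_compl_iff, Set.mem_singleton_iff]
    constructor
    · rintro ⟨t, ht, rfl⟩ e
      rw [← hx] at e
      have ht' : t ∈ Set.Ico x (x+1) := ⟨le_of_lt ht.1, ht.2⟩
      have hx' : x ∈ Set.Ico x (x+1) := ⟨le_refl x, by linarith⟩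
      exact absurd ((AddCircle.coe_eq_coe_iff_of_mem_Ico ht' hx').mp e)
        (ne_of_gt ht.1)
    · intro hw
      set s := AddCircle.equivIco 1 x w with hs
      have hws : ((s : ℝ) : AddCircle (1:ℝ)) = w := by
        have h2 := (AddCircle.equivIco 1 x).symm_apply_apply w
        rwa [AddCircle.equivIco, QuotientAddGroup.equivIcoMod_symm_apply] at h2
      have hsx : (s : ℝ) ≠ x := by
        intro e
        apply hw
        rw [← hws, e, hx]
      refine ⟨(s : ℝ), ⟨lt_of_le_of_ne s.2.1 (Ne.symm hsx), s.2.2⟩, hws⟩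
  rw [← himg]
  exact isPreconnected_Ioo.image _ (AddCircle.continuous_mk' 1).continuousOn

namespace MonotoneMobius
variable {X : Type*} [CircularOrder X] [TopologicalSpace X] {M : MonotoneMobius X}

lemma isPreconn (M : MonotoneMobius X) (ω₀ : X) :
    IsPreconnected {y : X | y ≠ ω₀} := by
  obtain ⟨e⟩ := M.circle
  have h := isPreconn_compl (e ω₀)
  have h2 := h.image e.symm e.symm.continuous.continuousOn
  have himg : e.symm '' ({e ω₀}ᶜ) = {y : X | y ≠ ω₀} := by
    rw [Set.image_compl_eq e.symm.bijective]
    ext y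
    simp only [Set.mem_compl_iff, Set.image_singleton, Homeomorph.symm_apply_apply,
      Set.mem_singleton_iff, Set.mem_setOf_eq]
  rwa [himg] at h2

lemma exists_mid {ω₀ a b : X} (haω₀ : a ≠ ω₀) (hbω₀ : b ≠ ω₀) (hab : a ≠ b) :
    ∃ y, y ≠ ω₀ ∧ y ≠ a ∧ y ≠ b ∧ M.D ω₀ a y = M.D ω₀ y b := by
  set f : X → ℝ := fun y => M.D ω₀ a y - M.D ω₀ b y with hf
  have hcont : ContinuousOn f {y : X | y ≠ ω₀} :=
    ContinuousOn.sub (M.contOn haω₀) (M.contOn hbω₀)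
  have hmem_a : a ∈ {y : X | y ≠ ω₀} := haω₀
  have hmem_b : b ∈ {y : X | y ≠ ω₀} := hbω₀
  have hiv := (M.isPreconn ω₀).intermediate_value hmem_a hmem_b hcont
  have hpab : 0 < M.D ω₀ a b := M.pos _ _ _ hab haω₀ hbω₀
  have hpba : 0 < M.D ω₀ b a := M.pos _ _ _ (Ne.symm hab) hbω₀ haω₀
  have hfa : f a = - M.D ω₀ b a := by simp [hf, M.refl]
  have hfb : f b = M.D ω₀ a b := by simp [hf, M.refl]
  have h0 : (0:ℝ) ∈ Set.Icc (f a) (f b) := by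
    constructor
    · rw [hfa]; linarith
    · rw [hfb]; linarith
  obtain ⟨y, hy, hfy⟩ := hiv h0
  have hya : y ≠ a := by
    rintro rfl
    rw [hfa] at hfy; linarith
  have hyb : y ≠ b := by
    rintro rfl
    rw [hfb] at hfy; linarith
  refine ⟨y, hy, hya, hyb, ?_⟩
  have h4 : M.D ω₀ a y = M.D ω₀ b y := by
    have h3 : M.D ω₀ a y - M.D ω₀ b y = 0 := by simpa [hf] using hfy
    linarith
  rw [h4, M.symm ω₀ b y]

end MonotoneMobius

/-- Let `M` be a monotone Möbius structure on the circle. For each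
harmonicity type `i ∈ {1,2,3}` (indexed here by `i : Fin 3`) and each nondegenerate triple
`t = (x₁,x₂,x₃)`, there exists a unique point `y` such that the 4-tuple `(y,x₁,x₂,x₃)` is
harmonic of type `i`: `|x_{i+1} y||x_i x_{i+2}| = |y x_{i+2}||x_i x_{i+1}|` in any semi-metric
of the structure; concretely, `y` is the unique midpoint in the semi-metric with infinitely
remote point `x_i`: `|x_{i+1} y|_{x_i} = |y x_{i+2}|_{x_i}`. Moreover, the pairs `(x_i, y)`
and `(x_{i+1}, x_{i+2})` separate each other. -/
theorem stmt8 {X : Type*} [CircularOrder X] [TopologicalSpace X]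
    (M : MonotoneMobius X) (i : Fin 3) (t : Fin 3 → X) (hinj : Function.Injective t) :
    ∃! y : X,
      (∀ j, y ≠ t j) ∧
      (∀ ω, (∀ j, ω ≠ t j) → ω ≠ y →
        M.D ω (t (i + 1)) y * M.D ω (t i) (t (i + 2)) =
          M.D ω y (t (i + 2)) * M.D ω (t i) (t (i + 1))) ∧
      M.D (t i) (t (i + 1)) y = M.D (t i) y (t (i + 2)) ∧
      PairSeparates (t i) y (t (i + 1)) (t (i + 2)) := by
  classical
  have hfin : ∀ (i j : Fin 3), j = i ∨ j = i + 1 ∨ j = i + 2 := by decide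
  have hne1 : ∀ i : Fin 3, ¬ i = i + 1 := by decide
  have hne2 : ∀ i : Fin 3, ¬ i = i + 2 := by decide
  have hne3 : ∀ i : Fin 3, ¬ i + 1 = i + 2 := by decide
  have hω₀a : t i ≠ t (i + 1) := fun h => hne1 i (hinj h)
  have hω₀b : t i ≠ t (i + 2) := fun h => hne2 i (hinj h)
  have hab : t (i + 1) ≠ t (i + 2) := fun h => hne3 i (hinj h)
  obtain ⟨y, hyω₀, hya, hyb, hC⟩ :=
    M.exists_mid (Ne.symm hω₀a) (Ne.symm hω₀b) hab
  have hD : PairSeparates (t i) y (t (i + 1)) (t (i + 2)) :=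
    M.ps_of_eq (Ne.symm hyω₀) hω₀a hω₀b hya hyb hab hC
  refine ⟨y, ⟨?_, ?_, hC, hD⟩, ?_⟩
  · intro j
    rcases hfin i j with h | h | h
    · rw [h]; exact hyω₀
    · rw [h]; exact hya
    · rw [h]; exact hyb
  · intro ω hω hωy
    exact M.harm_of_mid (hω i) (hω (i + 1)) (hω (i + 2)) hωy
      (Ne.symm hω₀a) (Ne.symm hω₀b) hyω₀ hC
  · rintro y' ⟨-, -, q3, q4⟩
    exact M.uniq q3 hC q4 hD
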